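/- arXiv:2204.02353 — 8 statements merged into one kernel-verified Lean document; each statement's English description precedes it below -/
import Mathlib

section
/- In a q-matroid (E,r), if z is a one-dimensional subspace of cyc(A) then z ∈ Cyc(A), i.e., r(B+z) = r(B) for every subspace B ≤ A of codimension 1 in A. -/
open Module Submodule

variable {K E : Type*} [Field K] [Fintype K] [AddCommGroup E] [Module K E]
  [FiniteDimensional K E]

/-- The dimension of a subspace, as an integer. -/
noncomputable def dimz {K E : Type*} [Field K] [AddCommGroup E] [Module K E]
    (A : Submodule K E) : ℤ :=
  (Module.finrank K ↥A : ℤ)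

/-- `r` is the rank function of a `q`-matroid on `E`: axioms (R1)-(R3). -/
def QMat {K E : Type*} [Field K] [AddCommGroup E] [Module K E]
    (r : Submodule K E → ℤ) : Prop :=
  (∀ A : Submodule K E, 0 ≤ r A ∧ r A ≤ dimz A) ∧
  (∀ A B : Submodule K E, A ≤ B → r A ≤ r B) ∧
  (∀ A B : Submodule K E, r (A ⊔ B) + r (A ⊓ B) ≤ r A + r B)

/-- A subspace is cyclic: every codimension-1 subspace has the same rank. -/
def QCyclic {K E : Type*} [Field K] [AddCommGroup E] [Module K E]
    (r : Submodule K E → ℤ) (A : Submodule K E) : Prop :=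
  ∀ B ≤ A, Module.finrank K ↥A = Module.finrank K ↥B + 1 → r B = r A

/-- The cyclic operator: sum of all one-dimensional `x ≤ A` with
`r (B ⊔ x) = r B` for all codimension-1 subspaces `B` of `A`. -/
noncomputable def qcyc {K E : Type*} [Field K] [AddCommGroup E] [Module K E]
    (r : Submodule K E → ℤ) (A : Submodule K E) : Submodule K E :=
  sSup {x : Submodule K E | x ≤ A ∧ Module.finrank K ↥x = 1 ∧
    ∀ B ≤ A, Module.finrank K ↥A = Module.finrank K ↥B + 1 → r (B ⊔ x) = r B}

/-- The closure operator: sum of all one-dimensional `x` with `r (A ⊔ x) = r A`. -/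
noncomputable def qcl {K E : Type*} [Field K] [AddCommGroup E] [Module K E]
    (r : Submodule K E → ℤ) (A : Submodule K E) : Submodule K E :=
  sSup {x : Submodule K E | Module.finrank K ↥x = 1 ∧ r (A ⊔ x) = r A}

/-- A subspace `F` is a flat: adding any one-dimensional space outside `F`
increases the rank. -/
def QFlat {K E : Type*} [Field K] [AddCommGroup E] [Module K E]
    (r : Submodule K E → ℤ) (F : Submodule K E) : Prop :=
  ∀ x : Submodule K E, Module.finrank K ↥x = 1 → ¬ x ≤ F → r F < r (F ⊔ x)

/-- any one-dimensional subspace of `cyc(A)` belongs to `Cyc(A)`. -/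
theorem one_dim_of_qcyc_mem_Cyc (r : Submodule K E → ℤ) (hM : QMat r)
    (A z : Submodule K E) (hz : z ≤ qcyc r A) (hz1 : Module.finrank K ↥z = 1) :
    ∀ B ≤ A, Module.finrank K ↥A = Module.finrank K ↥B + 1 → r (B ⊔ z) = r B := by
  obtain ⟨hR1, hR2, hR3⟩ := hM
  intro B hB hcodim
  -- key lemma: ranks don't change when adding two rank-preserving subspaces
  have key : ∀ x y : Submodule K E, r (B ⊔ x) = r B → r (B ⊔ y) = r B →
      r (B ⊔ (x ⊔ y)) = r B := by
    intro x y hx hy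
    have h3 := hR3 (B ⊔ x) (B ⊔ y)
    have hsup : (B ⊔ x) ⊔ (B ⊔ y) = B ⊔ (x ⊔ y) := by
      rw [sup_sup_sup_comm, sup_idem]
    rw [hsup, hx, hy] at h3
    have hble : B ≤ (B ⊔ x) ⊓ (B ⊔ y) := le_inf le_sup_left le_sup_left
    have h4 := hR2 B _ hble
    have h5 := hR2 B (B ⊔ (x ⊔ y)) le_sup_left
    omega
  -- the set of vectors v with r (B ⊔ span {v}) = r B is a submodule
  let W : Submodule K E :=
  { carrier := {v : E | r (B ⊔ (span K {v})) = r B}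
    zero_mem' := by
      show r (B ⊔ (span K {(0 : E)})) = r B
      rw [Submodule.span_zero_singleton, sup_bot_eq]
    add_mem' := by
      intro u v hu hv
      have hle : span K {u + v} ≤ span K {u} ⊔ span K {v} := by
        rw [Submodule.span_singleton_le_iff_mem]
        exact add_mem (Submodule.mem_sup_left (Submodule.mem_span_singleton_self u))
          (Submodule.mem_sup_right (Submodule.mem_span_singleton_self v))
      have h1 := hR2 (B ⊔ (span K {u + v})) (B ⊔ (span K {u} ⊔ span K {v}))
        (sup_le_sup_left hle B)
      have h2 := key _ _ hu hv
      have h3 := hR2 B (B ⊔ (span K {u + v})) le_sup_left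
      show r (B ⊔ (span K {u + v})) = r B
      omega
    smul_mem' := by
      intro c v hv
      have hle : span K {c • v} ≤ span K {v} := by
        rw [Submodule.span_singleton_le_iff_mem]
        exact Submodule.smul_mem _ c (Submodule.mem_span_singleton_self v)
      have h2 : r (B ⊔ span K {v}) = r B := hv
      have h1 := hR2 (B ⊔ (span K {c • v})) (B ⊔ (span K {v})) (sup_le_sup_left hle B)
      have h3 := hR2 B (B ⊔ (span K {c • v})) le_sup_left
      show r (B ⊔ (span K {c • v})) = r B
      omega }
  -- every generator of qcyc lies in W
  have hzW : z ≤ W := by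
    refine le_trans hz (sSup_le ?_)
    rintro x ⟨hxA, _, hx⟩ v hvx
    have hxB : r (B ⊔ x) = r B := hx B hB hcodim
    have hle : span K {v} ≤ x := by rwa [Submodule.span_singleton_le_iff_mem]
    have h1 := hR2 (B ⊔ (span K {v})) (B ⊔ x) (sup_le_sup_left hle B)
    have h3 := hR2 B (B ⊔ (span K {v})) le_sup_left
    show r (B ⊔ (span K {v})) = r B
    omega
  -- z is spanned by a single vector
  have hrank : Module.rank K ↥z = 1 := by
    rw [rank_eq_one_iff_finrank_eq_one]; exact hz1
  obtain ⟨v, hvz, hv0, hzle⟩ := (rank_submodule_eq_one_iff z).mp hrank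
  have hzeq : z = span K {v} := le_antisymm hzle
    (by rwa [Submodule.span_singleton_le_iff_mem])
  rw [hzeq]
  exact hzW hvz
end

section
/- The cyclic operator of a q-matroid satisfies: (cyc1) cyc(A) ≤ A for all A; (cyc2) if A ≤ B then cyc(A) ≤ cyc(B); (cyc3) cyc(cyc(A)) = cyc(A). -/
open Module Submodule

variable {K E : Type*} [Field K] [Fintype K] [AddCommGroup E] [Module K E]
  [FiniteDimensional K E]

/-! ### Auxiliary lemmas -/

/-- Joining a line not contained in `B` increases the dimension by exactly 1. -/
lemma fr_sup_line {B x : Submodule K E} (hx : Module.finrank K ↥x = 1) (hnle : ¬ x ≤ B) :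
    Module.finrank K ↥(B ⊔ x) = Module.finrank K ↥B + 1 := by
  have h := Submodule.finrank_sup_add_finrank_inf_eq B x
  have hlt : B ⊓ x < x := by
    refine lt_of_le_of_ne inf_le_right fun he => hnle ?_
    rw [← he]; exact inf_le_left
  have := Submodule.finrank_lt_finrank_of_lt hlt
  omega

lemma rank_sup_line_le {r : Submodule K E → ℤ} (hM : QMat r) (B x : Submodule K E)
    (hx : Module.finrank K ↥x = 1) : r (B ⊔ x) ≤ r B + 1 := by
  have hsub := hM.2.2 B x
  have h0 := (hM.1 (B ⊓ x)).1
  have h1 : r x ≤ 1 := by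
    have := (hM.1 x).2
    simpa [dimz, hx] using this
  omega

lemma qcyc_le' (r : Submodule K E → ℤ) (A : Submodule K E) : qcyc r A ≤ A :=
  sSup_le fun _ hx => hx.1

lemma qcyc_mono' {r : Submodule K E → ℤ} (hM : QMat r) {A B : Submodule K E} (hAB : A ≤ B) :
    qcyc r A ≤ qcyc r B := by
  apply sSup_le
  rintro x ⟨hxA, hx1, hcond⟩
  apply le_sSup
  refine ⟨hxA.trans hAB, hx1, fun C hCB hdimC => ?_⟩
  by_cases hxC : x ≤ C
  · rw [sup_eq_left.mpr hxC]
  · have hAnleC : ¬ A ≤ C := fun h => hxC (hxA.trans h)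
    -- A ⊔ C = B
    have hCltAC : C < A ⊔ C := lt_of_le_of_ne le_sup_right fun h => hAnleC (by rw [h]; exact le_sup_left)
    have hACB : A ⊔ C ≤ B := sup_le hAB hCB
    have h1 := Submodule.finrank_lt_finrank_of_lt hCltAC
    have h2 := Submodule.finrank_mono hACB
    have hACeq : A ⊔ C = B :=
      Submodule.eq_of_le_of_finrank_le hACB (by omega)
    -- A ⊓ C is a hyperplane of A
    have hdimformula := Submodule.finrank_sup_add_finrank_inf_eq A C
    have hlt : A ⊓ C < A := lt_of_le_of_ne inf_le_left fun h => hAnleC (inf_eq_left.mp h)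
    have h3 := Submodule.finrank_lt_finrank_of_lt hlt
    have hACdim : Module.finrank K ↥A = Module.finrank K ↥(A ⊓ C) + 1 := by
      rw [hACeq] at hdimformula; omega
    -- apply condition at A ⊓ C
    have hc := hcond (A ⊓ C) inf_le_left hACdim
    have hxnAC : ¬ x ≤ A ⊓ C := fun h => hxC (h.trans inf_le_right)
    have hsup : (A ⊓ C) ⊔ x = A := by
      refine Submodule.eq_of_le_of_finrank_le (sup_le inf_le_left hxA) ?_
      rw [fr_sup_line hx1 hxnAC]; omega
    rw [hsup] at hc
    -- submodularity gives r B ≤ r C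
    have hsub := hM.2.2 A C
    rw [hACeq] at hsub
    have hmono : r C ≤ r B := hM.2.1 _ _ hCB
    -- C ⊔ x = B
    have hCx : C ⊔ x = B := by
      refine Submodule.eq_of_le_of_finrank_le (sup_le hCB (hxA.trans hAB)) ?_
      rw [fr_sup_line hx1 hxC]; omega
    rw [hCx]; omega

/-- If `H` is a rank-deficient hyperplane of `A`, then `qcyc r A = qcyc r H`. -/
lemma qcyc_eq_of_deficient {r : Submodule K E → ℤ} (hM : QMat r) {A H : Submodule K E}
    (hHA : H ≤ A) (hdim : Module.finrank K ↥A = Module.finrank K ↥H + 1)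
    (hr : r H < r A) : qcyc r A = qcyc r H := by
  refine le_antisymm ?_ (qcyc_mono' hM hHA)
  apply sSup_le
  rintro x ⟨hxA, hx1, hcond⟩
  have hxH : x ≤ H := by
    by_contra hxH
    have hsup : H ⊔ x = A := by
      refine Submodule.eq_of_le_of_finrank_le (sup_le hHA hxA) ?_
      rw [fr_sup_line hx1 hxH]; omega
    have := hcond H hHA hdim
    rw [hsup] at this; omega
  apply le_sSup
  refine ⟨hxH, hx1, fun B hBH hdimB => ?_⟩
  by_cases hxB : x ≤ B
  · rw [sup_eq_left.mpr hxB]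
  · -- B ⊔ x = H
    have hBx : B ⊔ x = H := by
      refine Submodule.eq_of_le_of_finrank_le (sup_le hBH hxH) ?_
      rw [fr_sup_line hx1 hxB]; omega
    -- pick y ∈ A \ H
    have hHltA : H < A := by
      refine lt_of_le_of_ne hHA fun h => ?_
      rw [h] at hdim; omega
    obtain ⟨y, hyA, hyH⟩ := SetLike.exists_of_lt hHltA
    have hy0 : y ≠ 0 := fun h => hyH (h ▸ zero_mem H)
    have hy1 : Module.finrank K ↥(K ∙ y) = 1 := finrank_span_singleton hy0
    have hynB : ¬ (K ∙ y) ≤ B := fun h => hyH (hBH (h (mem_span_singleton_self y)))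
    set H1 := B ⊔ (K ∙ y) with hH1def
    have hH1dim : Module.finrank K ↥H1 = Module.finrank K ↥B + 1 := fr_sup_line hy1 hynB
    have hH1A : H1 ≤ A := sup_le (hBH.trans hHA) ((span_singleton_le_iff_mem y A).mpr hyA)
    have hAH1dim : Module.finrank K ↥A = Module.finrank K ↥H1 + 1 := by omega
    have hxnH1 : ¬ x ≤ H1 := by
      intro hxH1
      have hyH1 : y ∈ H1 := Submodule.mem_sup_right (mem_span_singleton_self y)
      have hHH1 : H ⊓ H1 = B := by
        have hlt : H ⊓ H1 < H1 := by
          refine lt_of_le_of_ne inf_le_right fun h => hyH ?_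
          have : y ∈ H ⊓ H1 := by rw [h]; exact hyH1
          exact this.1
        have h1 := Submodule.finrank_lt_finrank_of_lt hlt
        have hBle : B ≤ H ⊓ H1 := le_inf hBH le_sup_left
        have h2 := Submodule.finrank_mono hBle
        exact (Submodule.eq_of_le_of_finrank_le hBle (by omega)).symm
      exact hxB (by rw [← hHH1]; exact le_inf hxH hxH1)
    have hc := hcond H1 hH1A hAH1dim
    have hsupH1x : H1 ⊔ x = A := by
      refine Submodule.eq_of_le_of_finrank_le (sup_le hH1A hxA) ?_
      rw [fr_sup_line hx1 hxnH1]; omega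
    rw [hsupH1x] at hc
    -- r A = r H1 ≤ r B + 1
    have hunit := rank_sup_line_le hM B (K ∙ y) hy1
    rw [← hH1def] at hunit
    have hrBH : r B ≤ r H := hM.2.1 _ _ hBH
    rw [hBx]; omega

lemma qcyc_cyclic {r : Submodule K E → ℤ} (hM : QMat r) (A : Submodule K E) :
    QCyclic r (qcyc r A) := by
  suffices h : ∀ n (A : Submodule K E), Module.finrank K ↥A ≤ n → QCyclic r (qcyc r A) from
    h (Module.finrank K ↥A) A le_rfl
  intro n
  induction n using Nat.strong_induction_on with
  | _ n ih =>
    intro A hA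
    by_cases hdef : ∀ H ≤ A, Module.finrank K ↥A = Module.finrank K ↥H + 1 → r H = r A
    · have hCA : qcyc r A = A := by
        refine le_antisymm (qcyc_le' r A) ?_
        intro a ha
        by_cases ha0 : a = 0
        · rw [ha0]; exact zero_mem _
        · have hmem : (K ∙ a) ∈ {x : Submodule K E | x ≤ A ∧ Module.finrank K ↥x = 1 ∧
              ∀ B ≤ A, Module.finrank K ↥A = Module.finrank K ↥B + 1 → r (B ⊔ x) = r B} := by
            refine ⟨(span_singleton_le_iff_mem a A).mpr ha, finrank_span_singleton ha0,
              fun B hB hdimB => ?_⟩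
            have h1 : r B ≤ r (B ⊔ (K ∙ a)) := hM.2.1 _ _ le_sup_left
            have h2 : r (B ⊔ (K ∙ a)) ≤ r A :=
              hM.2.1 _ _ (sup_le hB ((span_singleton_le_iff_mem a A).mpr ha))
            have h3 := hdef B hB hdimB
            omega
          exact le_sSup hmem (mem_span_singleton_self a)
      rw [hCA]
      exact hdef
    · push_neg at hdef
      obtain ⟨H, hHA, hdim, hne⟩ := hdef
      have hlt : r H < r A := lt_of_le_of_ne (hM.2.1 _ _ hHA) hne
      rw [qcyc_eq_of_deficient hM hHA hdim hlt]
      have hn : Module.finrank K ↥H < n := by omega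
      exact ih (Module.finrank K ↥H) hn H le_rfl

/-- the cyclic operator satisfies (cyc1)-(cyc3). -/
theorem qcyc_properties (r : Submodule K E → ℤ) (hM : QMat r) :
    (∀ A : Submodule K E, qcyc r A ≤ A) ∧
    (∀ A B : Submodule K E, A ≤ B → qcyc r A ≤ qcyc r B) ∧
    (∀ A : Submodule K E, qcyc r (qcyc r A) = qcyc r A) := by
  refine ⟨qcyc_le' r, fun A B hAB => qcyc_mono' hM hAB, fun A => ?_⟩
  have hcyc := qcyc_cyclic hM A
  refine le_antisymm (qcyc_le' r _) ?_
  intro a ha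
  by_cases ha0 : a = 0
  · rw [ha0]; exact zero_mem _
  · have hmem : (K ∙ a) ∈ {x : Submodule K E | x ≤ qcyc r A ∧ Module.finrank K ↥x = 1 ∧
        ∀ B ≤ qcyc r A, Module.finrank K ↥(qcyc r A) = Module.finrank K ↥B + 1 →
          r (B ⊔ x) = r B} := by
      refine ⟨(span_singleton_le_iff_mem a _).mpr ha, finrank_span_singleton ha0,
        fun B hB hdimB => ?_⟩
      have h1 : r B ≤ r (B ⊔ (K ∙ a)) := hM.2.1 _ _ le_sup_left
      have h2 : r (B ⊔ (K ∙ a)) ≤ r (qcyc r A) :=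
        hM.2.1 _ _ (sup_le hB ((span_singleton_le_iff_mem a _).mpr ha))
      have h3 := hcyc B hB hdimB
      omega
    exact le_sSup hmem (mem_span_singleton_self a)
end

section
/- If C_1, ..., C_ℓ are cyclic subspaces of a q-matroid (E,r), then their vector-space sum C_1 + ... + C_ℓ is also cyclic. -/
open Module Submodule

variable {K E : Type*} [Field K] [Fintype K] [AddCommGroup E] [Module K E]
  [FiniteDimensional K E]

/-- the vector-space sum of cyclic subspaces is cyclic. -/
theorem sum_cyclic_is_cyclic (r : Submodule K E → ℤ) (hM : QMat r)
    (ℓ : ℕ) (C : Fin ℓ → Submodule K E) (hC : ∀ i, QCyclic r (C i)) :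
    QCyclic r (⨆ i, C i) := by
  intro D hD hrank
  set S := ⨆ i, C i with hS
  -- some C i is not ≤ D
  obtain ⟨i, hi⟩ : ∃ i, ¬ C i ≤ D := by
    by_contra h
    push_neg at h
    have : S ≤ D := iSup_le h
    have : S = D := le_antisymm this hD
    rw [this] at hrank
    omega
  have hCiS : C i ≤ S := le_iSup C i
  -- D ⊔ C i = S
  have hDlt : D < D ⊔ C i := by
    refine lt_of_le_of_ne le_sup_left ?_
    intro h
    exact hi (h ▸ le_sup_right)
  have hsupS : D ⊔ C i = S := by
    apply eq_of_le_of_finrank_le (sup_le hD hCiS)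
    have h1 : Module.finrank K ↥D < Module.finrank K ↥(D ⊔ C i) :=
      Submodule.finrank_lt_finrank_of_lt hDlt
    omega
  have hmod : Module.finrank K ↥(D ⊔ C i) + Module.finrank K ↥(D ⊓ C i)
      = Module.finrank K ↥D + Module.finrank K ↥(C i) :=
    Submodule.finrank_sup_add_finrank_inf_eq D (C i)
  rw [hsupS] at hmod
  have hhyp : Module.finrank K ↥(C i) = Module.finrank K ↥(D ⊓ C i) + 1 := by omega
  have hcyc : r (D ⊓ C i) = r (C i) := hC i (D ⊓ C i) inf_le_right hhyp
  have hsubmod := hM.2.2 D (C i)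
  rw [hsupS, hcyc] at hsubmod
  have hmono := hM.2.1 D S hD
  linarith only [hsubmod, hmono]
end

section
/- In a q-matroid, if A ≤ E and X ≤ A is a complement of cyc(A) in A (i.e., A = cyc(A) ⊕ X), then X is an independent space. -/
open Module Submodule

variable {K E : Type*} [Field K] [Fintype K] [AddCommGroup E] [Module K E]
  [FiniteDimensional K E]

/-- any complement of `cyc(A)` in `A` is independent. -/
theorem complement_of_qcyc_independent (r : Submodule K E → ℤ) (hM : QMat r)
    (A X : Submodule K E) (hXA : X ≤ A)
    (hmeet : qcyc r A ⊓ X = ⊥) (hjoin : qcyc r A ⊔ X = A) :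
    r X = dimz X := by
  classical
  obtain ⟨hR1, hR2, hR3⟩ := hM
  by_contra h
  have hrbot : r (⊥ : Submodule K E) = 0 := by
    have h1 := (hR1 ⊥).1
    have h2 := (hR1 ⊥).2
    have hd : dimz (⊥ : Submodule K E) = 0 := by simp [dimz]
    omega
  have hSne : ∃ n, ∃ C : Submodule K E, C ≤ X ∧ r C ≠ dimz C ∧
      Module.finrank K ↥C = n := ⟨_, X, le_refl X, h, rfl⟩
  obtain ⟨C, hCX, hCdep, hCn⟩ := Nat.find_spec hSne
  have hmin : ∀ D : Submodule K E, D ≤ X →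
      Module.finrank K ↥D < Module.finrank K ↥C → r D = dimz D := by
    intro D hDX hlt
    by_contra hD
    have := Nat.find_min' hSne ⟨D, hDX, hD, rfl⟩
    omega
  have hCdep' : r C < dimz C := lt_of_le_of_ne (hR1 C).2 hCdep
  have hCbot : C ≠ ⊥ := by
    rintro rfl
    exact hCdep (by simp [dimz, hrbot])
  -- show C ≤ qcyc r A
  have hCcyc : C ≤ qcyc r A := by
    intro c hc
    by_cases hc0 : c = 0
    · simpa [hc0] using (qcyc r A).zero_mem
    have hx1 : Module.finrank K ↥(span K {c}) = 1 := finrank_span_singleton hc0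
    have hxC : span K {c} ≤ C := (span_le).mpr (Set.singleton_subset_iff.mpr hc)
    have hxA : span K {c} ≤ A := le_trans hxC (le_trans hCX hXA)
    have hmem : span K {c} ∈ {x : Submodule K E | x ≤ A ∧ Module.finrank K ↥x = 1 ∧
        ∀ B ≤ A, Module.finrank K ↥A = Module.finrank K ↥B + 1 → r (B ⊔ x) = r B} := by
      refine ⟨hxA, hx1, ?_⟩
      intro B hBA hdim
      by_cases hxB : span K {c} ≤ B
      · rw [sup_eq_left.mpr hxB]
      -- B ⊔ x = A
      have hBlt : B < B ⊔ span K {c} := by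
        refine lt_of_le_of_ne le_sup_left fun he => hxB (he.symm ▸ le_sup_right)
      have hBxA : B ⊔ span K {c} = A := by
        apply Submodule.eq_of_le_of_finrank_le (sup_le hBA hxA)
        have := Submodule.finrank_lt_finrank_of_lt hBlt
        omega
      have hCB : ¬ C ≤ B := fun hh => hxB (le_trans hxC hh)
      have hDlt : C ⊓ B < C := by
        refine lt_of_le_of_ne inf_le_left fun he => hCB (he ▸ inf_le_right)
      have hsum := Submodule.finrank_sup_add_finrank_inf_eq C B
      have hsupA : C ⊔ B ≤ A := sup_le (le_trans hCX hXA) hBA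
      have h1 : Module.finrank K ↥(C ⊔ B) ≤ Module.finrank K ↥A :=
        Submodule.finrank_mono hsupA
      have h3 := Submodule.finrank_lt_finrank_of_lt hDlt
      have hdim1 : Module.finrank K ↥(C ⊓ B) + 1 = Module.finrank K ↥C := by omega
      have hDX : C ⊓ B ≤ X := le_trans inf_le_left hCX
      have hrD : r (C ⊓ B) = dimz (C ⊓ B) := hmin _ hDX (by omega)
      -- r C ≤ r (C ⊓ B)
      have hrC : r C ≤ r (C ⊓ B) := by
        have hdz : dimz (C ⊓ B) + 1 = dimz C := by
          simp only [dimz]; omega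
        omega
      have hsubm := hR3 C B
      have hmono1 : r A ≤ r (C ⊔ B) := by
        have : A ≤ C ⊔ B := by
          rw [← hBxA]
          exact sup_le le_sup_right (le_trans hxC le_sup_left)
        exact hR2 _ _ this
      have hmono2 : r B ≤ r A := hR2 _ _ hBA
      rw [hBxA]
      omega
    have : span K {c} ≤ qcyc r A := le_sSup hmem
    exact this (mem_span_singleton_self c)
  have : C ≤ qcyc r A ⊓ X := le_inf hCcyc hCX
  rw [hmeet, le_bot_iff] at this
  exact hCbot this
end

section
/- If X is a cyclic (cyclically closed) subspace of a q-matroid, then its closure cl(X) is a cyclic flat, i.e., cl(X) is both a flat and cyclic. -/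
open Module Submodule

variable {K E : Type*} [Field K] [Fintype K] [AddCommGroup E] [Module K E]
  [FiniteDimensional K E]

section Aux

variable {K E : Type*} [Field K] [Fintype K] [AddCommGroup E] [Module K E]
  [FiniteDimensional K E]

lemma finrank_sup_of_not_le {A x : Submodule K E} (hx : Module.finrank K ↥x = 1)
    (hnle : ¬ x ≤ A) :
    Module.finrank K ↥(A ⊔ x) = Module.finrank K ↥A + 1 := by
  have hinf : x ⊓ A = ⊥ := by
    rcases lt_or_eq_of_le (inf_le_left : x ⊓ A ≤ x) with h | h
    · have := Submodule.finrank_lt_finrank_of_lt h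
      rw [hx] at this
      have : Module.finrank K ↥(x ⊓ A) = 0 := by omega
      exact Submodule.finrank_eq_zero.mp this
    · exact absurd (h ▸ inf_le_right) hnle
  have := Submodule.finrank_sup_add_finrank_inf_eq A x
  rw [inf_comm, hinf] at this
  simp only [finrank_bot] at this
  omega

/-- Key lemma: if adding each generator keeps the rank, adding the sup keeps it. -/
lemma rank_sup_sSup (r : Submodule K E → ℤ) (hM : QMat r)
    (S : Set (Submodule K E)) (hS : ∀ x ∈ S, Module.finrank K ↥x = 1) :
    ∀ A : Submodule K E, (∀ x ∈ S, r (A ⊔ x) = r A) → r (A ⊔ sSup S) = r A := by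
  obtain ⟨h0, hmono, hsub⟩ := hM
  suffices h : ∀ n (A : Submodule K E), Module.finrank K E - Module.finrank K ↥A = n →
      (∀ x ∈ S, r (A ⊔ x) = r A) → r (A ⊔ sSup S) = r A from
    fun A => h _ A rfl
  intro n
  induction n using Nat.strong_induction_on with
  | _ n ih =>
  intro A hn hA
  by_cases hle : sSup S ≤ A
  · rw [sup_eq_left.mpr hle]
  · obtain ⟨x, hxS, hxA⟩ : ∃ x ∈ S, ¬ x ≤ A := by
      by_contra h
      push_neg at h
      exact hle (sSup_le h)
    set A' := A ⊔ x with hA'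
    have hrA' : r A' = r A := hA x hxS
    have hAle : ∀ y ∈ S, r (A' ⊔ y) = r A' := by
      intro y hyS
      have h1 : r ((A ⊔ x) ⊔ (A ⊔ y)) + r ((A ⊔ x) ⊓ (A ⊔ y)) ≤ r (A ⊔ x) + r (A ⊔ y) :=
        hsub _ _
      have h2 : r A ≤ r ((A ⊔ x) ⊓ (A ⊔ y)) := hmono _ _ (le_inf le_sup_left le_sup_left)
      have h3 : A' ⊔ y ≤ (A ⊔ x) ⊔ (A ⊔ y) := by
        apply sup_le
        · exact le_sup_left
        · exact le_trans le_sup_right le_sup_right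
      have h4 : r (A' ⊔ y) ≤ r ((A ⊔ x) ⊔ (A ⊔ y)) := hmono _ _ h3
      have h5 : r A' ≤ r (A' ⊔ y) := hmono _ _ le_sup_left
      rw [hA x hxS, hA y hyS] at h1
      omega
    have hdim : Module.finrank K ↥A' = Module.finrank K ↥A + 1 :=
      finrank_sup_of_not_le (hS x hxS) hxA
    have hAE : Module.finrank K ↥A' ≤ Module.finrank K E := Submodule.finrank_le _
    have hmeas : Module.finrank K E - Module.finrank K ↥A' < n := by omega
    have := ih _ hmeas A' rfl hAle
    have hsupeq : A' ⊔ sSup S = A ⊔ sSup S := by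
      rw [hA', sup_assoc, sup_eq_right.mpr (le_sSup hxS)]
    rw [hsupeq] at this
    rw [this, hrA']

lemma le_qcl (r : Submodule K E → ℤ) (X : Submodule K E) : X ≤ qcl r X := by
  intro v hv
  rcases eq_or_ne v 0 with rfl | hv0
  · exact zero_mem _
  · have h1 : Module.finrank K ↥(Submodule.span K {v}) = 1 :=
      finrank_span_singleton hv0
    have h2 : X ⊔ Submodule.span K {v} = X := by
      rw [sup_eq_left]
      exact (Submodule.span_singleton_le_iff_mem v X).mpr hv
    have : Submodule.span K {v} ≤ qcl r X :=
      le_sSup ⟨h1, by rw [h2]⟩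
    exact this (Submodule.mem_span_singleton_self v)

lemma rank_qcl (r : Submodule K E → ℤ) (hM : QMat r) (X : Submodule K E) :
    r (qcl r X) = r X := by
  have h := rank_sup_sSup r hM
    {x : Submodule K E | Module.finrank K ↥x = 1 ∧ r (X ⊔ x) = r X}
    (fun x hx => hx.1) X (fun x hx => hx.2)
  have : X ⊔ qcl r X = qcl r X := sup_eq_right.mpr (le_qcl r X)
  rw [qcl] at this ⊢
  rw [← this, h]

end Aux

/-- the closure of a cyclic subspace is a cyclic flat. -/
theorem qcl_of_cyclic_is_cyclic_flat (r : Submodule K E → ℤ) (hM : QMat r)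
    (X : Submodule K E) (hX : QCyclic r X) :
    QFlat r (qcl r X) ∧ QCyclic r (qcl r X) := by
  obtain ⟨h0, hmono, hsub⟩ := hM
  set F := qcl r X with hF
  have hXF : X ≤ F := le_qcl r X
  have hrF : r F = r X := rank_qcl r ⟨h0, hmono, hsub⟩ X
  constructor
  · -- flat
    intro x hx1 hxF
    rcases lt_or_eq_of_le (hmono _ _ (le_sup_left : F ≤ F ⊔ x)) with h | h
    · exact h
    · exfalso
      apply hxF
      apply le_sSup
      refine ⟨hx1, le_antisymm ?_ (hmono _ _ le_sup_left)⟩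
      calc r (X ⊔ x) ≤ r (F ⊔ x) := hmono _ _ (sup_le_sup_right hXF x)
        _ = r F := h.symm
        _ = r X := hrF
  · -- cyclic
    intro B hBF hdim
    by_cases hXB : X ≤ B
    · refine le_antisymm (hmono _ _ hBF) ?_
      rw [hrF]
      exact hmono _ _ hXB
    · have hXBF : X ⊔ B = F := by
        apply Submodule.eq_of_le_of_finrank_le (sup_le hXF hBF)
        have hlt : B < X ⊔ B := lt_of_le_of_ne le_sup_right
          (fun h => hXB (h ▸ (le_sup_left : X ≤ X ⊔ B)))
        have := Submodule.finrank_lt_finrank_of_lt hlt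
        omega
      have hinf : Module.finrank K ↥X = Module.finrank K ↥(X ⊓ B) + 1 := by
        have h1 := Submodule.finrank_sup_add_finrank_inf_eq X B
        rw [hXBF] at h1
        have hX1 : 1 ≤ Module.finrank K ↥X := by
          rcases Nat.eq_zero_or_pos (Module.finrank K ↥X) with h | h
          · exact absurd (Submodule.finrank_eq_zero.mp h ▸ bot_le) hXB
          · exact h
        omega
      have hr1 : r (X ⊓ B) = r X := hX (X ⊓ B) inf_le_left hinf
      have h1 : r (X ⊔ B) + r (X ⊓ B) ≤ r X + r B := hsub X B
      rw [hXBF, hr1] at h1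
      have h2 : r B ≤ r F := hmono _ _ hBF
      omega
end

section
/- For every subspace A of a q-matroid, cl(cyc(A)) ∩ A = cyc(A) and cyc(cl(A)) + A = cl(A). -/
set_option linter.unusedSectionVars false
set_option linter.unusedVariables false


open Module Submodule

variable {K E : Type*} [Field K] [Fintype K] [AddCommGroup E] [Module K E]
  [FiniteDimensional K E]

namespace QclQcycAux

variable (r : Submodule K E → ℤ)

theorem rMono (hM : QMat r) {A B : Submodule K E} (h : A ≤ B) : r A ≤ r B := hM.2.1 A B h

theorem rNonneg (hM : QMat r) (A : Submodule K E) : 0 ≤ r A := (hM.1 A).1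

theorem rLeDim (hM : QMat r) (A : Submodule K E) : r A ≤ (finrank K ↥A : ℤ) := (hM.1 A).2

theorem rSubmod (hM : QMat r) (A B : Submodule K E) :
    r (A ⊔ B) + r (A ⊓ B) ≤ r A + r B := hM.2.2 A B

theorem frMono {A B : Submodule K E} (h : A ≤ B) : finrank K ↥A ≤ finrank K ↥B :=
  Submodule.finrank_mono h

theorem frSupLine {B x : Submodule K E} (hx1 : finrank K ↥x = 1) (hxB : ¬ x ≤ B) :
    finrank K ↥(B ⊔ x) = finrank K ↥B + 1 := by
  have hlt : B ⊓ x < x := lt_of_le_of_ne inf_le_right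
    (by intro h; exact hxB (by rw [← h]; exact inf_le_left))
  have h0 : finrank K ↥(B ⊓ x) < 1 := hx1 ▸ Submodule.finrank_lt_finrank_of_lt hlt
  have hbot : B ⊓ x = ⊥ := Submodule.finrank_eq_zero.mp (by omega)
  have hfr := Submodule.finrank_sup_add_finrank_inf_eq B x
  rw [hbot, finrank_bot] at hfr
  omega

theorem hypJoin {X B x : Submodule K E} (hBX : B ≤ X)
    (hd : finrank K ↥X = finrank K ↥B + 1) (hx1 : finrank K ↥x = 1)
    (hxX : x ≤ X) (hxB : ¬ x ≤ B) : B ⊔ x = X :=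
  Submodule.eq_of_le_of_finrank_eq (sup_le hBX hxX) (by rw [frSupLine hx1 hxB, hd])

theorem existsLine {Y F : Submodule K E} (h : Y < F) :
    ∃ v : E, v ∈ F ∧ v ∉ Y ∧ v ≠ 0 := by
  obtain ⟨v, hvF, hvY⟩ := SetLike.exists_of_lt h
  exact ⟨v, hvF, hvY, fun h0 => hvY (by rw [h0]; exact Y.zero_mem)⟩

theorem rHyper (hM : QMat r) {X B : Submodule K E} (hBX : B ≤ X)
    (hd : finrank K ↥X = finrank K ↥B + 1) : r X ≤ r B + 1 := by
  have hlt : B < X := lt_of_le_of_ne hBX (by intro h; rw [h] at hd; omega)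
  obtain ⟨v, hvX, hvB, hv0⟩ := existsLine hlt
  have hx1 : finrank K ↥(span K {v}) = 1 := finrank_span_singleton hv0
  have hxX : span K {v} ≤ X := (span_le).mpr (by simpa using hvX)
  have hxB : ¬ span K {v} ≤ B := fun h => hvB (h (mem_span_singleton_self v))
  have hj := hypJoin hBX hd hx1 hxX hxB
  have hs := rSubmod r hM B (span K {v})
  rw [hj] at hs
  have h1 : r (span K {v}) ≤ ((1 : ℕ) : ℤ) := hx1 ▸ rLeDim r hM (span K {v})
  have h1' : r (span K {v}) ≤ 1 := by exact_mod_cast h1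
  have h2 : 0 ≤ r (B ⊓ span K {v}) := rNonneg r hM _
  linarith only [hs, h1', h2]

theorem rCodim (hM : QMat r) : ∀ (n : ℕ) (X B : Submodule K E), B ≤ X →
    finrank K ↥X ≤ finrank K ↥B + n → r X ≤ r B + (n : ℤ) := by
  intro n
  induction n with
  | zero =>
    intro X B hBX hle
    have hEq : B = X := Submodule.eq_of_le_of_finrank_eq hBX
      (le_antisymm (frMono hBX) (by omega))
    rw [hEq]; simp
  | succ n ih =>
    intro X B hBX hle
    rcases eq_or_lt_of_le hBX with h | hlt
    · rw [h]
      have h0 : (0 : ℤ) ≤ ((n : ℤ) + 1) := by positivity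
      push_cast
      linarith only [h0]
    · obtain ⟨v, hvX, hvB, hv0⟩ := existsLine hlt
      have hx1 : finrank K ↥(span K {v}) = 1 := finrank_span_singleton hv0
      have hxB : ¬ span K {v} ≤ B := fun h => hvB (h (mem_span_singleton_self v))
      have hd : finrank K ↥(B ⊔ span K {v}) = finrank K ↥B + 1 := frSupLine hx1 hxB
      have hB'X : B ⊔ span K {v} ≤ X := sup_le hBX ((span_le).mpr (by simpa using hvX))
      have h1 : r (B ⊔ span K {v}) ≤ r B + 1 := rHyper r hM le_sup_left hd
      have h2 : r X ≤ r (B ⊔ span K {v}) + (n : ℤ) := ih X (B ⊔ span K {v}) hB'X (by omega)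
      push_cast
      linarith only [h1, h2]

/-- The set of rank-deficient hyperplanes of `X`. -/
def badSet (X : Submodule K E) : Set (Submodule K E) :=
  {B | B ≤ X ∧ finrank K ↥X = finrank K ↥B + 1 ∧ r B < r X}

/-- The intersection of `X` with all its rank-deficient hyperplanes. -/
noncomputable def DD (X : Submodule K E) : Submodule K E := X ⊓ sInf (badSet r X)

theorem qcycEq (hM : QMat r) (X : Submodule K E) : qcyc r X = DD r X := by
  apply le_antisymm
  · apply sSup_le
    rintro x ⟨hxX, hx1, hcond⟩
    refine le_inf hxX (le_sInf ?_)
    rintro B ⟨hBX, hd, hbad⟩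
    by_contra hxB
    have h1 := hcond B hBX hd
    rw [hypJoin hBX hd hx1 hxX hxB] at h1
    linarith only [h1, hbad]
  · intro v hv
    rcases eq_or_ne v 0 with h0 | h0
    · rw [h0]; exact Submodule.zero_mem _
    obtain ⟨hvX, hvI⟩ := Submodule.mem_inf.mp hv
    have hspanX : span K {v} ≤ X := (span_le).mpr (by simpa using hvX)
    have hmem : span K {v} ∈ {x : Submodule K E | x ≤ X ∧ finrank K ↥x = 1 ∧
        ∀ B ≤ X, finrank K ↥X = finrank K ↥B + 1 → r (B ⊔ x) = r B} := by
      refine ⟨hspanX, finrank_span_singleton h0, ?_⟩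
      intro B hBX hd
      by_cases hxB : span K {v} ≤ B
      · rw [sup_eq_left.mpr hxB]
      · have hXeq : B ⊔ span K {v} = X :=
          hypJoin hBX hd (finrank_span_singleton h0) hspanX hxB
        rw [hXeq]
        have hle := rMono r hM hBX
        have hnb : ¬ r B < r X := by
          intro hb
          exact hxB ((span_le).mpr (by
            simpa using (Submodule.mem_sInf.mp hvI B ⟨hBX, hd, hb⟩)))
        linarith only [hle, hnb]
    exact le_sSup hmem (mem_span_singleton_self v)

theorem qcycLe (X : Submodule K E) : qcyc r X ≤ X :=
  sSup_le fun _ hx => hx.1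

theorem finiteSubmodule : Finite (Submodule K E) := by
  have : Finite E := Module.finite_of_finite K
  exact Finite.of_injective (fun S : Submodule K E => (S : Set E)) SetLike.coe_injective

theorem sSupInd (P : Submodule K E → Prop) (h0 : P ⊥)
    (hsup : ∀ a b, P a → P b → P (a ⊔ b)) (T : Set (Submodule K E))
    (hT : ∀ x ∈ T, P x) : P (sSup T) := by
  classical
  have : Finite (Submodule K E) := finiteSubmodule
  have main : ∀ s : Finset (Submodule K E), (∀ x ∈ s, P x) → P (s.sup id) := by
    intro s
    induction s using Finset.induction_on with
    | empty => intro _; simpa using h0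
    | insert _ _ ha ih =>
      intro h
      rw [Finset.sup_insert]
      exact hsup _ _ (h _ (Finset.mem_insert_self _ _))
        (ih fun x hx => h x (Finset.mem_insert_of_mem hx))
  have hfin : T.Finite := Set.toFinite T
  rw [← hfin.coe_toFinset, ← Finset.sup_id_eq_sSup]
  exact main _ (fun x hx => hT x (by rwa [Set.Finite.mem_toFinset] at hx))

theorem leQcl (hM : QMat r) (A : Submodule K E) : A ≤ qcl r A := by
  intro v hv
  rcases eq_or_ne v 0 with h0 | h0
  · rw [h0]; exact Submodule.zero_mem _
  have hmem : span K {v} ∈ {x : Submodule K E | finrank K ↥x = 1 ∧ r (A ⊔ x) = r A} :=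
    ⟨finrank_span_singleton h0, by rw [sup_eq_left.mpr ((span_le).mpr (by simpa using hv))]⟩
  exact le_sSup hmem (mem_span_singleton_self v)

theorem rQcl (hM : QMat r) (A : Submodule K E) : r (qcl r A) = r A := by
  have h1 : r (A ⊔ qcl r A) = r A := by
    unfold qcl
    apply sSupInd (fun S => r (A ⊔ S) = r A)
    · simp
    · intro a b ha hb
      have hs := rSubmod r hM (A ⊔ a) (A ⊔ b)
      have he : (A ⊔ a) ⊔ (A ⊔ b) = A ⊔ (a ⊔ b) := by rw [sup_sup_sup_comm, sup_idem]
      have h2 : r A ≤ r ((A ⊔ a) ⊓ (A ⊔ b)) := rMono r hM (le_inf le_sup_left le_sup_left)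
      have h3 : r A ≤ r (A ⊔ (a ⊔ b)) := rMono r hM le_sup_left
      rw [he, ha, hb] at hs
      linarith only [hs, h2, h3]
    · rintro x ⟨hx1, hx2⟩; exact hx2
  rwa [sup_eq_right.mpr (leQcl r hM A)] at h1

theorem rSupQcl (hM : QMat r) {A x : Submodule K E} (hx : x ≤ qcl r A) :
    r (A ⊔ x) = r A := by
  have h1 := rMono r hM (le_sup_left : A ≤ A ⊔ x)
  have h2 := rMono r hM (sup_le (leQcl r hM A) hx)
  rw [rQcl r hM A] at h2
  linarith only [h1, h2]

theorem phiBound (hM : QMat r) {F : Submodule K E} (hne : (badSet r F).Nonempty) :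
    r (DD r F) + ((finrank K ↥F : ℤ) - finrank K ↥(DD r F)) ≤ r F := by
  have hrec : ∀ (n : ℕ) (J : Submodule K E), finrank K ↥J ≤ n → J ≤ F →
      sInf (badSet r F) ≤ J →
      r J + ((finrank K ↥F : ℤ) - finrank K ↥J) ≤ r F →
      ∃ J₂, J₂ ≤ F ∧ sInf (badSet r F) ≤ J₂ ∧ (∀ B ∈ badSet r F, J₂ ≤ B) ∧
        r J₂ + ((finrank K ↥F : ℤ) - finrank K ↥J₂) ≤ r F := by
    intro n
    induction n with
    | zero =>
      intro J hJn hJF hIJ hG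
      have hbot : J = ⊥ := Submodule.finrank_eq_zero.mp (by omega)
      exact ⟨J, hJF, hIJ, fun B _ => by rw [hbot]; exact bot_le, hG⟩
    | succ n ih =>
      intro J hJn hJF hIJ hG
      by_cases hall : ∀ B ∈ badSet r F, J ≤ B
      · exact ⟨J, hJF, hIJ, hall, hG⟩
      push_neg at hall
      obtain ⟨B, hB, hJB⟩ := hall
      obtain ⟨hBF, hd, hbad⟩ := hB
      have hlt : J ⊓ B < J := lt_of_le_of_ne inf_le_left
        (fun h => hJB (by rw [← h]; exact inf_le_right))
      have hfrlt := Submodule.finrank_lt_finrank_of_lt hlt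
      have hJBF : J ⊔ B = F := by
        apply Submodule.eq_of_le_of_finrank_eq (sup_le hJF hBF)
        have h1 : B < J ⊔ B := lt_of_le_of_ne le_sup_right
          (fun h => hJB (by rw [h]; exact le_sup_left))
        have h2 := Submodule.finrank_lt_finrank_of_lt h1
        have h3 := frMono (sup_le hJF hBF)
        omega
      have hsub := rSubmod r hM J B
      rw [hJBF] at hsub
      have hfr := Submodule.finrank_sup_add_finrank_inf_eq J B
      rw [hJBF] at hfr
      have hG' : r (J ⊓ B) + ((finrank K ↥F : ℤ) - finrank K ↥(J ⊓ B)) ≤ r F := by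
        have hc : (finrank K ↥(J ⊓ B) : ℤ)
            = (finrank K ↥J : ℤ) + (finrank K ↥B : ℤ) - (finrank K ↥F : ℤ) := by omega
        have hdc : (finrank K ↥F : ℤ) = (finrank K ↥B : ℤ) + 1 := by exact_mod_cast hd
        linarith only [hsub, hG, hbad, hc, hdc]
      exact ih (J ⊓ B) (by omega) (le_trans inf_le_left hJF)
        (le_inf hIJ (sInf_le ⟨hBF, hd, hbad⟩)) hG'
  obtain ⟨B0, hB0⟩ := hne
  obtain ⟨hB0F, hd0, hbad0⟩ := hB0
  have hG0 : r B0 + ((finrank K ↥F : ℤ) - finrank K ↥B0) ≤ r F := by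
    have h : (finrank K ↥F : ℤ) = (finrank K ↥B0 : ℤ) + 1 := by exact_mod_cast hd0
    linarith only [h, hbad0]
  obtain ⟨J₂, hJ₂F, hIJ₂, hall, hG₂⟩ :=
    hrec (finrank K ↥B0) B0 le_rfl hB0F (sInf_le ⟨hB0F, hd0, hbad0⟩) hG0
  have hJ₂ : J₂ = sInf (badSet r F) := le_antisymm (le_sInf hall) hIJ₂
  have hDD : DD r F = J₂ := by
    unfold DD
    rw [← hJ₂]
    exact inf_eq_right.mpr hJ₂F
  rw [hDD]; exact hG₂

theorem part1 (hM : QMat r) (A : Submodule K E) :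
    qcl r (qcyc r A) ⊓ A = qcyc r A := by
  rw [qcycEq r hM]
  apply le_antisymm
  · intro v hv
    obtain ⟨hv1, hv2⟩ := Submodule.mem_inf.mp hv
    rcases eq_or_ne v 0 with h0 | h0
    · rw [h0]; exact Submodule.zero_mem _
    have hx1 : finrank K ↥(span K {v}) = 1 := finrank_span_singleton h0
    have hxA : span K {v} ≤ A := (span_le).mpr (by simpa using hv2)
    have hxcl : span K {v} ≤ qcl r (DD r A) := (span_le).mpr (by simpa using hv1)
    have hrx : r (DD r A ⊔ span K {v}) = r (DD r A) := rSupQcl r hM hxcl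
    suffices hxD : span K {v} ≤ DD r A by exact hxD (mem_span_singleton_self v)
    refine le_inf hxA (le_sInf ?_)
    rintro B ⟨hBA, hd, hbad⟩
    by_contra hxB
    have hDB : DD r A ≤ B := le_trans inf_le_right (sInf_le ⟨hBA, hd, hbad⟩)
    have hBxA : B ⊔ span K {v} = A := hypJoin hBA hd hx1 hxA hxB
    have hsub := rSubmod r hM B (DD r A ⊔ span K {v})
    have he : B ⊔ (DD r A ⊔ span K {v}) = A := by
      rw [← sup_assoc, sup_eq_left.mpr hDB, hBxA]
    have hge : r (DD r A) ≤ r (B ⊓ (DD r A ⊔ span K {v})) :=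
      rMono r hM (le_inf hDB le_sup_left)
    rw [he, hrx] at hsub
    linarith only [hsub, hge, hbad]
  · exact le_inf (leQcl r hM (DD r A)) inf_le_left

theorem part2 (hM : QMat r) (A : Submodule K E) :
    qcyc r (qcl r A) ⊔ A = qcl r A := by
  rw [qcycEq r hM]
  set F := qcl r A with hF
  have hDF : DD r F ≤ F := inf_le_left
  have key : ∀ (d : ℕ) (Y : Submodule K E), A ≤ Y → Y ≤ F →
      finrank K ↥F ≤ finrank K ↥Y + d → Y ⊔ DD r F = F := by
    intro d
    induction d with
    | zero =>
      intro Y hAY hYF hfr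
      have hEq : Y = F := Submodule.eq_of_le_of_finrank_eq hYF
        (le_antisymm (frMono hYF) (by omega))
      rw [hEq]
      exact sup_eq_left.mpr hDF
    | succ d ih =>
      intro Y hAY hYF hfr
      rcases eq_or_lt_of_le hYF with hYeq | hlt
      · rw [hYeq]; exact sup_eq_left.mpr hDF
      by_cases hDY : DD r F ≤ Y
      · exfalso
        obtain ⟨v, hvF, hvY, hv0⟩ := existsLine hlt
        have hx1 : finrank K ↥(span K {v}) = 1 := finrank_span_singleton hv0
        have hxF : span K {v} ≤ F := (span_le).mpr (by simpa using hvF)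
        have hxY : ¬ span K {v} ≤ Y := fun h => hvY (h (mem_span_singleton_self v))
        have hfrx : finrank K ↥(Y ⊔ span K {v}) = finrank K ↥Y + 1 := frSupLine hx1 hxY
        have hIH := ih (Y ⊔ span K {v}) (le_trans hAY le_sup_left)
          (sup_le hYF hxF) (by omega)
        have hYxF : Y ⊔ span K {v} = F := by
          rwa [sup_eq_left.mpr (le_trans hDY le_sup_left)] at hIH
        have hhyp : finrank K ↥F = finrank K ↥Y + 1 := by rw [← hYxF, hfrx]
        have hrY : r Y = r F := by
          have h1 : r A ≤ r Y := rMono r hM hAY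
          have h2 : r Y ≤ r F := rMono r hM hYF
          have h3 : r F = r A := rQcl r hM A
          linarith only [h1, h2, h3]
        by_cases hne : (badSet r F).Nonempty
        · have hphi := phiBound r hM hne
          have hfrD : finrank K ↥(DD r F) ≤ finrank K ↥Y := frMono hDY
          have hcod : r Y ≤ r (DD r F) + ((finrank K ↥Y - finrank K ↥(DD r F) : ℕ) : ℤ) :=
            rCodim r hM (finrank K ↥Y - finrank K ↥(DD r F)) Y (DD r F) hDY (by omega)
          have hcast : ((finrank K ↥Y - finrank K ↥(DD r F) : ℕ) : ℤ)
              = (finrank K ↥Y : ℤ) - (finrank K ↥(DD r F) : ℤ) := by omega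
          have hhyp' : (finrank K ↥F : ℤ) = (finrank K ↥Y : ℤ) + 1 := by exact_mod_cast hhyp
          linarith only [hphi, hcod, hcast, hhyp', hrY]
        · rw [Set.not_nonempty_iff_eq_empty] at hne
          have hDeq : DD r F = F := by
            unfold DD
            rw [hne, sInf_empty, inf_top_eq]
          rw [hDeq] at hDY
          exact absurd (le_antisymm hYF hDY) (ne_of_lt hlt)
      · obtain ⟨v, hvD, hvY⟩ := SetLike.not_le_iff_exists.mp hDY
        have hv0 : v ≠ 0 := fun h => hvY (by rw [h]; exact Y.zero_mem)
        have hx1 : finrank K ↥(span K {v}) = 1 := finrank_span_singleton hv0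
        have hxD : span K {v} ≤ DD r F := (span_le).mpr (by simpa using hvD)
        have hxF : span K {v} ≤ F := le_trans hxD hDF
        have hxY : ¬ span K {v} ≤ Y := fun h => hvY (h (mem_span_singleton_self v))
        have hfrx : finrank K ↥(Y ⊔ span K {v}) = finrank K ↥Y + 1 := frSupLine hx1 hxY
        have hIH := ih (Y ⊔ span K {v}) (le_trans hAY le_sup_left)
          (sup_le hYF hxF) (by omega)
        rwa [sup_assoc, sup_eq_right.mpr hxD] at hIH
  have hmain := key (finrank K ↥F) A le_rfl (leQcl r hM A) (by omega)
  rw [sup_comm]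
  exact hmain

end QclQcycAux

/-- `cl(cyc(A)) ∩ A = cyc(A)` and `cyc(cl(A)) + A = cl(A)`. -/
theorem qcl_qcyc_interaction (r : Submodule K E → ℤ) (hM : QMat r)
    (A : Submodule K E) :
    qcl r (qcyc r A) ⊓ A = qcyc r A ∧ qcyc r (qcl r A) ⊔ A = qcl r A :=
  ⟨QclQcycAux.part1 r hM A, QclQcycAux.part2 r hM A⟩
end

section
/- If F is a cyclic flat of a q-matroid M and G < F is a subspace, then F/G is a cyclic flat of the contraction M/G, whose rank function is r_{M/G}(T/G) = r(T) - r(G). -/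
open Module Submodule

variable {K E : Type*} [Field K] [Fintype K] [AddCommGroup E] [Module K E]
  [FiniteDimensional K E]

/-- if `F` is a cyclic flat and `G < F`, then `F/G` is a cyclic
flat of the contraction `M/G`. -/
theorem cyclic_flat_contraction (r : Submodule K E → ℤ) (hM : QMat r)
    (F G : Submodule K E) (hF : QFlat r F ∧ QCyclic r F) (hGF : G < F) :
    QFlat (fun T : Submodule K (E ⧸ G) => r (T.comap G.mkQ) - r G)
        (F.map G.mkQ) ∧
    QCyclic (fun T : Submodule K (E ⧸ G) => r (T.comap G.mkQ) - r G)
        (F.map G.mkQ) := by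
  obtain ⟨hflat, hcyc⟩ := hF
  have hmono := hM.2.1
  have hGleF : G ≤ F := hGF.le
  -- comap mkQ (map mkQ F) = F
  have hcm : (F.map G.mkQ).comap G.mkQ = F := by
    rw [Submodule.comap_map_mkQ, sup_eq_right.mpr hGleF]
  -- rank-nullity style lemma
  have hrank : ∀ T : Submodule K E, G ≤ T →
      finrank K T = finrank K (T.map G.mkQ) + finrank K G := by
    intro T hGT
    have h1 := LinearMap.finrank_range_add_finrank_ker (G.mkQ.comp T.subtype)
    have h2 : LinearMap.range (G.mkQ.comp T.subtype) = T.map G.mkQ := by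
      rw [LinearMap.range_comp, Submodule.range_subtype]
    have h3 : LinearMap.ker (G.mkQ.comp T.subtype) = G.comap T.subtype := by
      rw [LinearMap.ker_comp, Submodule.ker_mkQ]
    have h4 : finrank K (G.comap T.subtype) = finrank K G :=
      LinearEquiv.finrank_eq (Submodule.comapSubtypeEquivOfLe hGT)
    rw [h2, h3, h4] at h1
    omega
  constructor
  · -- flat
    intro x hx1 hxF
    simp only
    have hnle : ¬ x.comap G.mkQ ≤ F := by
      intro h
      apply hxF
      have hmc : (x.comap G.mkQ).map G.mkQ = x :=
        Submodule.map_comap_eq_self (by rw [Submodule.range_mkQ]; exact le_top)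
      calc x = (x.comap G.mkQ).map G.mkQ := hmc.symm
        _ ≤ F.map G.mkQ := Submodule.map_mono h
    obtain ⟨v, hvx, hvF⟩ := SetLike.not_le_iff_exists.mp hnle
    have hv0 : v ≠ 0 := fun h => hvF (h ▸ F.zero_mem)
    have hspan1 : finrank K (K ∙ v) = 1 := finrank_span_singleton hv0
    have hspanF : ¬ (K ∙ v) ≤ F := fun h => hvF (h (Submodule.mem_span_singleton_self v))
    have hlt := hflat (K ∙ v) hspan1 hspanF
    have hle2 : F ⊔ (K ∙ v) ≤ ((F.map G.mkQ) ⊔ x).comap G.mkQ := by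
      apply sup_le
      · exact le_trans (le_of_eq hcm.symm) (Submodule.comap_mono le_sup_left)
      · refine le_trans ?_ (Submodule.comap_mono le_sup_right)
        rwa [Submodule.span_singleton_le_iff_mem]
    have := hmono _ _ hle2
    rw [hcm]
    omega
  · -- cyclic
    intro B hBF hdim
    simp only
    have hGB : G ≤ B.comap G.mkQ := by
      intro g hg
      simp [Submodule.mem_comap, Submodule.mkQ_apply, (Submodule.Quotient.mk_eq_zero G).mpr hg]
    have hBle : B.comap G.mkQ ≤ F := hcm ▸ Submodule.comap_mono hBF
    have hmcB : (B.comap G.mkQ).map G.mkQ = B :=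
      Submodule.map_comap_eq_self (by rw [Submodule.range_mkQ]; exact le_top)
    have h1 := hrank F hGleF
    have h2 := hrank (B.comap G.mkQ) hGB
    rw [hmcB] at h2
    have hdimF : finrank K F = finrank K (B.comap G.mkQ) + 1 := by omega
    have := hcyc (B.comap G.mkQ) hBle hdimF
    rw [hcm]
    omega
end

section
/- If μ : L(E) → ℤ is an additive function on the lattice of subspaces of a finite-dimensional F_q-vector space E (i.e., μ(0) = 0 and μ(X+Y) = μ(X) + μ(Y) whenever X ∩ Y = 0), and dim E ≥ 2, then there exists ℓ ∈ ℤ with μ(A) = ℓ · dim(A) for all subspaces A ≤ E. -/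
open Module Submodule

variable {K E : Type*} [Field K] [Fintype K] [AddCommGroup E] [Module K E]
  [FiniteDimensional K E]

lemma line_disjoint {K E : Type*} [Field K] [AddCommGroup E] [Module K E]
    [FiniteDimensional K E] {x y : Submodule K E}
    (hx : Module.finrank K ↥x = 1) (hy : Module.finrank K ↥y = 1) (hxy : x ≠ y) :
    x ⊓ y = ⊥ := by
  by_contra h
  have h1 : 1 ≤ Module.finrank K ↥(x ⊓ y) := by
    rw [Submodule.one_le_finrank_iff]; exact h
  have hxeq : x ⊓ y = x := Submodule.eq_of_le_of_finrank_le inf_le_left (by omega)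
  have hyeq : x ⊓ y = y := Submodule.eq_of_le_of_finrank_le inf_le_right (by omega)
  exact hxy (hxeq ▸ hyeq)

lemma line_exists_span {K E : Type*} [Field K] [AddCommGroup E] [Module K E]
    {x : Submodule K E} (hx : Module.finrank K ↥x = 1) :
    ∃ u : E, u ≠ 0 ∧ x = Submodule.span K {u} := by
  have hbot : x ≠ ⊥ := by
    intro h; rw [h] at hx; simp at hx
  obtain ⟨v, hv, hv0⟩ := Submodule.exists_mem_ne_zero_of_ne_bot hbot
  refine ⟨v, hv0, ?_⟩
  have hle : Submodule.span K {v} ≤ x := by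
    rw [Submodule.span_singleton_le_iff_mem]; exact hv
  have : Module.finrank K ↥(Submodule.span K {v}) = 1 := finrank_span_singleton hv0
  haveI : FiniteDimensional K ↥x := by
    apply FiniteDimensional.of_finrank_eq_succ hx
  exact (Submodule.eq_of_le_of_finrank_le hle (by omega)).symm

lemma mu_line_const {K E : Type*} [Field K] [AddCommGroup E] [Module K E]
    [FiniteDimensional K E] (μ : Submodule K E → ℤ)
    (hadd : ∀ X Y : Submodule K E, X ⊓ Y = ⊥ → μ (X ⊔ Y) = μ X + μ Y)
    {x y : Submodule K E}
    (hx : Module.finrank K ↥x = 1) (hy : Module.finrank K ↥y = 1) :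
    μ x = μ y := by
  rcases eq_or_ne x y with rfl | hxy
  · rfl
  obtain ⟨u, hu0, hux⟩ := line_exists_span hx
  obtain ⟨v, hv0, hvy⟩ := line_exists_span hy
  set z : Submodule K E := Submodule.span K {u + v} with hz
  have hvx : ¬ v ∈ x := by
    intro hvmem
    apply hxy
    have hyx : y ≤ x := by rw [hvy, Submodule.span_singleton_le_iff_mem]; exact hvmem
    exact (Submodule.eq_of_le_of_finrank_le hyx (by omega)).symm
  have huy : ¬ u ∈ y := by
    intro humem
    apply hxy
    have hxy' : x ≤ y := by rw [hux, Submodule.span_singleton_le_iff_mem]; exact humem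
    exact Submodule.eq_of_le_of_finrank_le hxy' (by omega)
  have hum : u ∈ x := hux ▸ Submodule.mem_span_singleton_self u
  have hvm : v ∈ y := hvy ▸ Submodule.mem_span_singleton_self v
  have huv0 : u + v ≠ 0 := by
    intro h
    apply hvx
    have : v = -u := (neg_eq_of_add_eq_zero_right h).symm
    rw [this]; exact Submodule.neg_mem _ hum
  have hzr : Module.finrank K ↥z = 1 := finrank_span_singleton huv0
  have hzx : z ≠ x := by
    intro h
    apply hvx
    have h1 : u + v ∈ x := h ▸ Submodule.mem_span_singleton_self _
    have := Submodule.sub_mem _ h1 hum; simpa using this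
  have hzy : z ≠ y := by
    intro h
    apply huy
    have h1 : u + v ∈ y := h ▸ Submodule.mem_span_singleton_self _
    have := Submodule.sub_mem _ h1 hvm; simpa using this
  have hzle : z ≤ x ⊔ y := by
    rw [hz, Submodule.span_singleton_le_iff_mem]
    exact Submodule.add_mem _ (Submodule.mem_sup_left hum) (Submodule.mem_sup_right hvm)
  have hsup1 : x ⊔ z = x ⊔ y := by
    apply le_antisymm (sup_le le_sup_left hzle)
    apply sup_le le_sup_left
    rw [hvy, Submodule.span_singleton_le_iff_mem]
    have h1 : u ∈ x ⊔ z := Submodule.mem_sup_left hum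
    have h2 : u + v ∈ x ⊔ z := Submodule.mem_sup_right (Submodule.mem_span_singleton_self _)
    have := Submodule.sub_mem _ h2 h1; simpa using this
  have hsup2 : y ⊔ z = x ⊔ y := by
    apply le_antisymm (sup_le le_sup_right hzle)
    apply sup_le ?_ le_sup_left
    rw [hux, Submodule.span_singleton_le_iff_mem]
    have h1 : v ∈ y ⊔ z := Submodule.mem_sup_left hvm
    have h2 : u + v ∈ y ⊔ z := Submodule.mem_sup_right (Submodule.mem_span_singleton_self _)
    have := Submodule.sub_mem _ h2 h1; simpa using this
  have e1 := hadd x y (line_disjoint hx hy hxy)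
  have e2 := hadd x z (line_disjoint hx hzr (Ne.symm hzx))
  have e3 := hadd y z (line_disjoint hy hzr (Ne.symm hzy))
  rw [hsup1] at e2
  rw [hsup2] at e3
  omega

/-- an additive function on the lattice of subspaces is a
constant multiple of the dimension. -/
theorem additive_is_multiple_of_dim (μ : Submodule K E → ℤ)
    (h0 : μ ⊥ = 0)
    (hadd : ∀ X Y : Submodule K E, X ⊓ Y = ⊥ → μ (X ⊔ Y) = μ X + μ Y)
    (hdim : 2 ≤ Module.finrank K E) :
    ∃ ℓ : ℤ, ∀ A : Submodule K E, μ A = ℓ * dimz A := by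
  have h1E : 0 < Module.finrank K E := by omega
  haveI : Nontrivial E := Module.nontrivial_of_finrank_pos h1E
  obtain ⟨e, he⟩ := exists_ne (0 : E)
  set ℓ := μ (Submodule.span K {e}) with hl
  have hespan : Module.finrank K ↥(Submodule.span K {e}) = 1 := finrank_span_singleton he
  refine ⟨ℓ, ?_⟩
  have main : ∀ n : ℕ, ∀ A : Submodule K E, Module.finrank K ↥A = n → μ A = ℓ * n := by
    intro n
    induction n with
    | zero =>
      intro A hA
      have : A = ⊥ := Submodule.finrank_eq_zero.mp hA
      rw [this, h0]; simp
    | succ n ih =>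
      intro A hA
      have hAbot : A ≠ ⊥ := by
        intro h; rw [h] at hA; simp at hA
      obtain ⟨v, hv, hv0⟩ := Submodule.exists_mem_ne_zero_of_ne_bot hAbot
      set x := Submodule.span K {v} with hxdef
      have hxr : Module.finrank K ↥x = 1 := finrank_span_singleton hv0
      have hxA : x ≤ A := by rw [hxdef, Submodule.span_singleton_le_iff_mem]; exact hv
      obtain ⟨C, hC⟩ := Submodule.exists_isCompl x
      set B := C ⊓ A with hBdef
      have hdisj : x ⊓ B = ⊥ := by
        rw [hBdef, ← inf_assoc, hC.inf_eq_bot, bot_inf_eq]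
      have hsup : x ⊔ B = A := by
        rw [hBdef, ← sup_inf_assoc_of_le C hxA, hC.sup_eq_top, top_inf_eq]
      have hrk : Module.finrank K ↥B = n := by
        have := Submodule.finrank_sup_add_finrank_inf_eq x B
        rw [hsup, hdisj] at this
        simp only [finrank_bot] at this
        omega
      have := hadd x B hdisj
      rw [hsup] at this
      rw [this, ih B hrk, mu_line_const μ hadd hxr hespan]
      push_cast
      ring
  intro A
  rw [main (Module.finrank K ↥A) A rfl, dimz]
end
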